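/- arXiv:2505.20905 — 3 statements merged into one kernel-verified Lean document; each statement's English description precedes it below -/
import Mathlib

section
/- The control operator W^T f = u^f(T) maps the N-dimensional subspace F_1^T = span{S_k(T-·) : k = 1,...,N} of L²(0,T) bijectively onto ℂ^N; in particular the system is exactly controllable from F_1^T. -/
open MeasureTheory

/-- The wave kernel `S(t,λ)`: `sin(√λ t)/√λ` for `λ > 0`,
`sinh(√(-λ) t)/√(-λ)` for `λ < 0`, and `t` for `λ = 0`. -/
noncomputable def S (t lam : ℝ) : ℝ :=
  if 0 < lam then Real.sin (Real.sqrt lam * t) / Real.sqrt lam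
  else if lam < 0 then Real.sinh (Real.sqrt (-lam) * t) / Real.sqrt (-lam)
  else t

noncomputable def SC (t lam : ℝ) : ℝ :=
  if 0 < lam then Real.cos (Real.sqrt lam * t)
  else if lam < 0 then Real.cosh (Real.sqrt (-lam) * t)
  else 1

private lemma hlin (c t : ℝ) : HasDerivAt (fun s : ℝ => c * s) c t := by
  simpa using (hasDerivAt_id t).const_mul c

lemma hasDerivAt_S (lam t : ℝ) : HasDerivAt (fun s => S s lam) (SC t lam) t := by
  rcases lt_trichotomy 0 lam with h | h | h
  · have hs : Real.sqrt lam ≠ 0 := by positivity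
    simp only [S, SC, if_pos h]
    have := ((hlin (Real.sqrt lam) t).sin).div_const (Real.sqrt lam)
    exact this.congr_deriv (mul_div_cancel_right₀ _ hs)
  · simp only [S, SC, ← h, lt_irrefl, if_false]
    exact hasDerivAt_id t
  · have hlt : lam < 0 := h
    have h0 : (0:ℝ) < -lam := by linarith
    have hs : Real.sqrt (-lam) ≠ 0 := by positivity
    simp only [S, SC, if_neg (not_lt.mpr hlt.le), if_pos hlt]
    have := ((hlin (Real.sqrt (-lam)) t).sinh).div_const (Real.sqrt (-lam))
    exact this.congr_deriv (mul_div_cancel_right₀ _ hs)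

lemma hasDerivAt_SC (lam t : ℝ) : HasDerivAt (fun s => SC s lam) (-lam * S t lam) t := by
  rcases lt_trichotomy 0 lam with h | h | h
  · simp only [S, SC, if_pos h]
    have := (hlin (Real.sqrt lam) t).cos
    convert this using 1
    have hs : Real.sqrt lam ≠ 0 := by positivity
    field_simp
    linear_combination (Real.sin (Real.sqrt lam * t)) * Real.sq_sqrt h.le
  · simp only [S, SC, ← h, lt_irrefl, if_false]
    simpa using hasDerivAt_const t (1:ℝ)
  · have hlt : lam < 0 := h
    have h0 : (0:ℝ) < -lam := by linarith
    simp only [S, SC, if_neg (not_lt.mpr hlt.le), if_pos hlt]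
    have := (hlin (Real.sqrt (-lam)) t).cosh
    convert this using 1
    have hs : Real.sqrt (-lam) ≠ 0 := by positivity
    field_simp
    linear_combination (-Real.sinh (Real.sqrt (-lam) * t)) * Real.sq_sqrt h0.le

lemma SC_sq_add (lam t : ℝ) : SC t lam ^ 2 + lam * S t lam ^ 2 = 1 := by
  rcases lt_trichotomy 0 lam with h | h | h
  · have hs : Real.sqrt lam ≠ 0 := by positivity
    simp only [S, SC, if_pos h]
    rw [div_pow]
    have h2 : Real.sqrt lam ^ 2 ≠ 0 := pow_ne_zero _ hs
    field_simp
    rw [Real.sq_sqrt h.le]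
    linear_combination lam * Real.sin_sq_add_cos_sq (Real.sqrt lam * t)
  · simp [S, SC, ← h]
  · have hlt : lam < 0 := h
    have h0 : (0:ℝ) < -lam := by linarith
    have hs : Real.sqrt (-lam) ≠ 0 := by positivity
    simp only [S, SC, if_neg (not_lt.mpr hlt.le), if_pos hlt]
    rw [div_pow]
    have hsq : Real.sqrt (-lam) ^ 2 = -lam := Real.sq_sqrt h0.le
    have := Real.cosh_sq_sub_sinh_sq (Real.sqrt (-lam) * t)
    have h2 : Real.sqrt (-lam) ^ 2 ≠ 0 := pow_ne_zero _ hs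
    field_simp
    nlinarith [this]

lemma continuous_S (lam : ℝ) : Continuous (fun t => S t lam) :=
  Differentiable.continuous (fun t => (hasDerivAt_S lam t).differentiableAt)

lemma key_indep {N : ℕ} {T : ℝ} (hT : 0 < T) (lam : Fin N → ℝ)
    (hlam : Function.Injective lam) (a : Fin N → ℝ)
    (ha : ∀ t ∈ Set.Ioo (0:ℝ) T, ∑ j, a j * S t (lam j) = 0) : a = 0 := by
  have derstep : ∀ (F G : ℝ → ℝ), (∀ t, HasDerivAt F (G t) t) →
      (∀ t ∈ Set.Ioo (0:ℝ) T, F t = 0) → ∀ t ∈ Set.Ioo (0:ℝ) T, G t = 0 := by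
    intro F G hFG hF t ht
    have hev : F =ᶠ[nhds t] (fun _ => 0) :=
      Filter.eventuallyEq_of_mem (isOpen_Ioo.mem_nhds ht) hF
    have hd : deriv F t = 0 := by rw [hev.deriv_eq]; simp
    rw [← (hFG t).deriv]; exact hd
  have dS : ∀ n : ℕ, ∀ t : ℝ,
      HasDerivAt (fun s => ∑ j, a j * (-lam j)^n * S s (lam j))
        (∑ j, a j * (-lam j)^n * SC t (lam j)) t := by
    intro n t
    exact HasDerivAt.fun_sum fun j _ => (hasDerivAt_S (lam j) t).const_mul _
  have dSC : ∀ n : ℕ, ∀ t : ℝ,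
      HasDerivAt (fun s => ∑ j, a j * (-lam j)^n * SC s (lam j))
        (∑ j, a j * (-lam j)^(n+1) * S t (lam j)) t := by
    intro n t
    have := HasDerivAt.fun_sum (fun j (_ : j ∈ Finset.univ) =>
      (hasDerivAt_SC (lam j) t).const_mul (a j * (-lam j)^n))
    exact this.congr_deriv (Finset.sum_congr rfl fun j _ => by ring)
  have main : ∀ n : ℕ,
      (∀ t ∈ Set.Ioo (0:ℝ) T, ∑ j, a j * (-lam j)^n * S t (lam j) = 0)
      ∧ (∀ t ∈ Set.Ioo (0:ℝ) T, ∑ j, a j * (-lam j)^n * SC t (lam j) = 0) := by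
    intro n
    induction n with
    | zero =>
      have h1 : ∀ t ∈ Set.Ioo (0:ℝ) T, ∑ j, a j * (-lam j)^0 * S t (lam j) = 0 := by
        intro t ht; simpa using ha t ht
      exact ⟨h1, derstep _ _ (dS 0) h1⟩
    | succ n ih =>
      have h1 : ∀ t ∈ Set.Ioo (0:ℝ) T, ∑ j, a j * (-lam j)^(n+1) * S t (lam j) = 0 :=
        derstep _ _ (dSC n) ih.2
      exact ⟨h1, derstep _ _ (dS (n+1)) h1⟩
  have ht₀ : T/2 ∈ Set.Ioo (0:ℝ) T := ⟨by linarith, by linarith⟩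
  set t₀ := T/2
  have hμ : Function.Injective (fun j => -lam j) := fun i j h => hlam (by simpa using h : lam i = lam j)
  have hp : (fun j => a j * SC t₀ (lam j)) = 0 := by
    apply Matrix.eq_zero_of_forall_pow_sum_mul_pow_eq_zero hμ
    intro i
    have := (main (i:ℕ)).2 t₀ ht₀
    rw [← this]
    exact Finset.sum_congr rfl fun j _ => by ring
  have hq : (fun j => a j * S t₀ (lam j)) = 0 := by
    apply Matrix.eq_zero_of_forall_pow_sum_mul_pow_eq_zero hμ
    intro i
    have := (main (i:ℕ)).1 t₀ ht₀
    rw [← this]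
    exact Finset.sum_congr rfl fun j _ => by ring
  funext j
  by_contra haj
  have h1 : SC t₀ (lam j) = 0 := by
    have := congrFun hp j
    simpa [haj] using (mul_eq_zero.mp this).resolve_left haj
  have h2 : S t₀ (lam j) = 0 := by
    have := congrFun hq j
    simpa [haj] using (mul_eq_zero.mp this).resolve_left haj
  have := SC_sq_add (lam j) t₀
  rw [h1, h2] at this
  simp at this

lemma zero_of_integral_sq_zero {T : ℝ} (hT : 0 < T) (u : ℝ → ℝ) (hu : Continuous u)
    (h : (∫ τ in (0:ℝ)..T, (u τ)^2) = 0) : ∀ t ∈ Set.Ioo (0:ℝ) T, u t = 0 := by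
  have hint : MeasureTheory.IntegrableOn (fun τ => (u τ)^2) (Set.Ioc (0:ℝ) T) :=
    (hu.pow 2).integrableOn_Ioc
  rw [intervalIntegral.integral_of_le hT.le] at h
  have hae : (fun τ => (u τ)^2) =ᵐ[MeasureTheory.volume.restrict (Set.Ioc (0:ℝ) T)] 0 :=
    (MeasureTheory.integral_eq_zero_iff_of_nonneg_ae
      (Filter.Eventually.of_forall fun x => sq_nonneg (u x)) hint).mp h
  intro t ht
  by_contra htne
  set V : Set ℝ := {x | u x ≠ 0} ∩ Set.Ioo 0 T with hV
  have hVopen : IsOpen V :=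
    (isOpen_compl_iff.mpr (isClosed_singleton.preimage hu)).inter isOpen_Ioo
  have htV : t ∈ V := ⟨htne, ht⟩
  have hnull : MeasureTheory.volume.restrict (Set.Ioc (0:ℝ) T) {x | (u x)^2 ≠ 0} = 0 := by
    simpa only [Filter.EventuallyEq, MeasureTheory.ae_iff, Pi.zero_apply] using hae
  have hsub : V ⊆ {x | (u x)^2 ≠ 0} := fun x hx => pow_ne_zero 2 hx.1
  have hVnull : MeasureTheory.volume.restrict (Set.Ioc (0:ℝ) T) V = 0 :=
    MeasureTheory.measure_mono_null hsub hnull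
  rw [MeasureTheory.Measure.restrict_apply hVopen.measurableSet] at hVnull
  have hVsub : V ∩ Set.Ioc 0 T = V := by
    apply Set.inter_eq_left.mpr
    exact fun x hx => Set.Ioo_subset_Ioc_self hx.2
  rw [hVsub] at hVnull
  exact absurd hVnull (hVopen.measure_pos MeasureTheory.volume ⟨t, htV⟩).ne'

/-- the control operator `W^T f = u^f(T)` maps the `N`-dimensional
subspace `F₁^T = span{Sₖ(T-·)}` bijectively onto `ℂ^N`: every state `y ∈ ℂ^N`
is reached by a unique control from `F₁^T` (exact controllability). -/
theorem control_operator_bijective_on_F1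
    (N : ℕ) (hN : 0 < N) (T : ℝ) (hT : 0 < T)
    (A : Matrix (Fin N) (Fin N) ℝ)
    (lam : Fin N → ℝ) (hlam : Function.Injective lam)
    (phiv : Fin N → Fin N → ℝ)
    (heig : ∀ k : Fin N, A.mulVec (phiv k) = lam k • phiv k)
    (hfirst : ∀ k : Fin N, phiv k ⟨0, hN⟩ = 1)
    (rho : Fin N → ℝ)
    (hrho : ∀ k : Fin N, rho k = ∑ n : Fin N, (phiv k n) ^ 2)
    (W : (ℝ → ℂ) → (Fin N → ℂ))
    (hW : ∀ (f : ℝ → ℂ),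
      W f = fun i => ∑ k : Fin N,
        (1 / (rho k : ℂ)) * (∫ τ in (0:ℝ)..T, f τ * (S (T - τ) (lam k) : ℂ))
          * (phiv k i : ℂ)) :
    ∀ y : Fin N → ℂ, ∃! f : ℝ → ℂ,
      f ∈ Submodule.span ℂ
          (Set.range fun k : Fin N => fun t : ℝ => (S (T - t) (lam k) : ℂ)) ∧
        W f = y := by
  intro y
  set g : Fin N → ℝ → ℂ := fun k t => (S (T - t) (lam k) : ℂ) with hg
  have contS : ∀ l : ℝ, Continuous fun τ : ℝ => S (T - τ) l := fun l =>
    (continuous_S l).comp (continuous_const.sub continuous_id)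
  set G : Fin N → Fin N → ℝ :=
    fun j k => ∫ τ in (0:ℝ)..T, S (T-τ) (lam j) * S (T-τ) (lam k) with hG
  -- injectivity of the Gram matrix
  have Ginj : ∀ a : Fin N → ℝ, (∀ k, ∑ j, a j * G j k = 0) → a = 0 := by
    intro a hk
    set u : ℝ → ℝ := fun τ => ∑ j, a j * S (T - τ) (lam j) with hu
    have hucont : Continuous u :=
      continuous_finset_sum _ fun j _ => continuous_const.mul (contS (lam j))
    have huτ : ∀ τ : ℝ, (u τ)^2
        = ∑ k, ∑ j, (a k * a j) * (S (T-τ) (lam j) * S (T-τ) (lam k)) := by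
      intro τ
      rw [sq, hu, Finset.sum_mul_sum]
      exact Finset.sum_congr rfl fun k _ => Finset.sum_congr rfl fun j _ => by ring
    have hint : (∫ τ in (0:ℝ)..T, (u τ)^2) = ∑ k, ∑ j, (a k * a j) * G j k := by
      rw [intervalIntegral.integral_congr (g := fun τ =>
        ∑ k, ∑ j, (a k * a j) * (S (T-τ) (lam j) * S (T-τ) (lam k))) (fun τ _ => huτ τ)]
      rw [intervalIntegral.integral_finset_sum]
      · apply Finset.sum_congr rfl; intro k _
        rw [intervalIntegral.integral_finset_sum]
        · exact Finset.sum_congr rfl fun j _ => intervalIntegral.integral_const_mul _ _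
        · intro j _
          exact (continuous_const.mul ((contS (lam j)).mul (contS (lam k)))).intervalIntegrable _ _
      · intro k _
        apply Continuous.intervalIntegrable
        exact continuous_finset_sum _ fun j _ =>
          continuous_const.mul ((contS (lam j)).mul (contS (lam k)))
    have hzero : (∫ τ in (0:ℝ)..T, (u τ)^2) = 0 := by
      rw [hint]
      have : ∀ k, ∑ j, (a k * a j) * G j k = a k * ∑ j, a j * G j k := by
        intro k
        rw [Finset.mul_sum]
        exact Finset.sum_congr rfl fun j _ => by ring
      simp_rw [this, hk, mul_zero, Finset.sum_const_zero]
    have huIoo := zero_of_integral_sq_zero hT u hucont hzero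
    apply key_indep hT lam hlam a
    intro t ht
    have hTt : T - t ∈ Set.Ioo (0:ℝ) T := ⟨by linarith [ht.2], by linarith [ht.1]⟩
    have := huIoo (T - t) hTt
    rw [hu] at this
    simpa [sub_sub_cancel] using this
  -- linear independence of the (complexified) eigenvectors
  set v : Fin N → (Fin N → ℂ) := fun k i => (phiv k i : ℂ) with hv
  have hvind : LinearIndependent ℂ v := by
    apply Module.End.eigenvectors_linearIndependent'
      (Matrix.mulVecLin (A.map (algebraMap ℝ ℂ))) (fun k => (lam k : ℂ))
      (fun i j h => hlam (Complex.ofReal_injective h)) v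
    intro k
    refine ⟨Module.End.mem_eigenspace_iff.mpr ?_, ?_⟩
    · funext i
      have h1 := congrFun (heig k) i
      simp only [Matrix.mulVec, dotProduct, Pi.smul_apply, smul_eq_mul] at h1
      simp only [Matrix.mulVecLin_apply, Matrix.mulVec, dotProduct, Matrix.map_apply, hv,
        Pi.smul_apply, smul_eq_mul, Complex.coe_algebraMap]
      exact_mod_cast congrArg (fun r : ℝ => (r : ℂ)) h1
    · intro h0
      have := congrFun h0 ⟨0, hN⟩
      simp only [hv, hfirst k, Pi.zero_apply, Complex.ofReal_one] at this
      exact one_ne_zero this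
  have hrhopos : ∀ k, (0:ℝ) < rho k := by
    intro k
    rw [hrho k]
    have h1 : (1:ℝ) ≤ ∑ n, (phiv k n)^2 := by
      simpa [hfirst k] using Finset.single_le_sum (f := fun n => (phiv k n)^2)
        (fun n _ => sq_nonneg _) (Finset.mem_univ ⟨0, hN⟩)
    linarith
  have hrhone : ∀ k, ((rho k : ℂ)) ≠ 0 := fun k => by
    exact_mod_cast (hrhopos k).ne'
  -- the integral of a span element against the kernel
  have hIcalc : ∀ (c : Fin N → ℂ) (k : Fin N),
      (∫ τ in (0:ℝ)..T, (∑ j, c j * g j τ) * (S (T-τ) (lam k) : ℂ))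
        = ∑ j, c j * (G j k : ℂ) := by
    intro c k
    have hptw : ∀ τ : ℝ, (∑ j, c j * g j τ) * (S (T-τ) (lam k):ℂ)
        = ∑ j, c j * ((S (T-τ) (lam j) * S (T-τ) (lam k) : ℝ) : ℂ) := by
      intro τ
      rw [Finset.sum_mul]
      apply Finset.sum_congr rfl; intro j _
      rw [hg]
      push_cast
      ring
    rw [intervalIntegral.integral_congr (fun τ _ => hptw τ)]
    rw [intervalIntegral.integral_finset_sum]
    · apply Finset.sum_congr rfl; intro j _
      rw [intervalIntegral.integral_const_mul, intervalIntegral.integral_ofReal]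
    · intro j _
      apply Continuous.intervalIntegrable
      exact continuous_const.mul
        (Complex.continuous_ofReal.comp ((contS (lam j)).mul (contS (lam k))))
  -- the matrix of W restricted to the span, in the coordinates c
  set Mm : Matrix (Fin N) (Fin N) ℂ :=
    Matrix.of (fun i j => ∑ k, (1/(rho k:ℂ)) * (G j k : ℂ) * v k i) with hMm
  have hexp : ∀ (c : Fin N → ℂ) (i : Fin N), Mm.mulVec c i
      = ∑ k, ((1/(rho k:ℂ)) * (∑ j, c j * (G j k:ℂ))) * v k i := by
    intro c i
    rw [Matrix.mulVec]
    rw [dotProduct]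
    calc ∑ j, Mm i j * c j
        = ∑ j, ∑ k, (1/(rho k:ℂ)) * (G j k:ℂ) * v k i * c j := by
          apply Finset.sum_congr rfl; intro j _
          rw [hMm, Matrix.of_apply, Finset.sum_mul]
      _ = ∑ k, ∑ j, (1/(rho k:ℂ)) * (G j k:ℂ) * v k i * c j := Finset.sum_comm
      _ = ∑ k, ((1/(rho k:ℂ)) * (∑ j, c j * (G j k:ℂ))) * v k i := by
          apply Finset.sum_congr rfl; intro k _
          rw [Finset.mul_sum, Finset.sum_mul]
          apply Finset.sum_congr rfl; intro j _
          ring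
  have hWc : ∀ c : Fin N → ℂ, W (fun t => ∑ j, c j * g j t) = Mm.mulVec c := by
    intro c
    rw [hW]
    funext i
    rw [hexp c i]
    simp_rw [hIcalc c]
    rfl
  -- injectivity
  have hMinj0 : ∀ c : Fin N → ℂ, Mm.mulVec c = 0 → c = 0 := by
    intro c hc
    have hsum : ∑ k, ((1/(rho k:ℂ)) * (∑ j, c j * (G j k:ℂ))) • v k = 0 := by
      funext i
      have h0 := congrFun hc i
      rw [hexp c i] at h0
      simpa [Finset.sum_apply, smul_eq_mul] using h0
    have hd := Fintype.linearIndependent_iff.mp hvind _ hsum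
    have hIk : ∀ k, ∑ j, c j * (G j k:ℂ) = 0 := by
      intro k
      have := hd k
      rcases mul_eq_zero.mp this with h | h
      · exact absurd h (by simp [hrhone k])
      · exact h
    have hre : (fun j => (c j).re) = 0 := by
      apply Ginj
      intro k
      have := congrArg Complex.re (hIk k)
      simpa [Complex.re_sum, Complex.mul_re] using this
    have him : (fun j => (c j).im) = 0 := by
      apply Ginj
      intro k
      have := congrArg Complex.im (hIk k)
      simpa [Complex.im_sum, Complex.mul_im] using this
    funext j
    exact Complex.ext (congrFun hre j) (congrFun him j)
  have hMinj : Function.Injective Mm.mulVecLin := by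
    rw [← LinearMap.ker_eq_bot]
    rw [LinearMap.ker_eq_bot']
    intro c hc
    exact hMinj0 c hc
  have hMsurj : Function.Surjective Mm.mulVecLin :=
    (LinearMap.injective_iff_surjective).mp hMinj
  obtain ⟨c, hc⟩ := hMsurj y
  rw [Matrix.mulVecLin_apply] at hc
  refine ⟨fun t => ∑ j, c j * g j t, ⟨?_, ?_⟩, ?_⟩
  · have heq : (fun t => ∑ j, c j * g j t) = ∑ j, c j • g j := by
      funext t; simp [Finset.sum_apply]
    rw [heq]
    exact Submodule.sum_mem _ fun j _ =>
      Submodule.smul_mem _ _ (Submodule.subset_span ⟨j, rfl⟩)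
  · rw [hWc c]; exact hc
  · rintro f' ⟨hf'mem, hf'W⟩
    obtain ⟨c', hc'⟩ := (Submodule.mem_span_range_iff_exists_fun ℂ).mp hf'mem
    have hf'eq : f' = fun t => ∑ j, c' j * g j t := by
      rw [← hc']; funext t; simp [Finset.sum_apply]
    have hMc' : Mm.mulVec c' = y := by rw [← hf'W, hf'eq, hWc c']
    have hcc : c' = c := by
      have : Mm.mulVec (c' - c) = 0 := by
        have := map_sub Mm.mulVecLin c' c
        simp only [Matrix.mulVecLin_apply] at this
        rw [this, hMc', hc, sub_self]
      have := hMinj0 _ this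
      exact sub_eq_zero.mp this
    rw [hf'eq, hcc]
end

section
/- The connecting operator admits the dynamic representation (C^T f)(t) = (1/2) ∫_0^T (∫_{|t-s|}^{2T-s-t} r(τ) dτ) f(s) ds, where r(t) = ∑_{k=1}^N S_k(t)/ρ_k is the response function; equivalently, for each k, (1/2)∫_{|t-s|}^{2T-s-t} S(τ,λ_k) dτ = S(T-t,λ_k) S(T-s,λ_k) for all 0 ≤ s,t ≤ T. -/
open MeasureTheory

lemma S_cont (lam : ℝ) : Continuous (fun τ => S τ lam) := by
  unfold S
  split_ifs <;> fun_prop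

lemma S_key (lam a b : ℝ) :
    (1/2) * (∫ τ in (|a - b|)..(a + b), S τ lam) = S a lam * S b lam := by
  rcases lt_trichotomy lam 0 with h | h | h
  · -- hyperbolic case
    set c := Real.sqrt (-lam) with hc
    have hcpos : 0 < c := Real.sqrt_pos.2 (by linarith)
    have hc2 : c * c = -lam := Real.mul_self_sqrt (by linarith)
    have hS : ∀ τ : ℝ, S τ lam = Real.sinh (c * τ) / c := by
      intro τ; simp [S, h, not_lt.2 h.le, hc]
    have hF : ∀ τ : ℝ, HasDerivAt (fun x => Real.cosh (c * x) / (c * c))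
        (Real.sinh (c * τ) / c) τ := by
      intro τ
      have h1 : HasDerivAt (fun x : ℝ => c * x) c τ := by
        simpa using (hasDerivAt_id τ).const_mul c
      have h2 := (Real.hasDerivAt_cosh (c * τ)).comp τ h1
      have h3 := h2.div_const (c * c)
      convert h3 using 1
      · exact rfl
      · exact rfl
      · exact rfl
      field_simp
    have hint : (∫ τ in (|a - b|)..(a + b), S τ lam)
        = Real.cosh (c * (a+b)) / (c*c) - Real.cosh (c * |a - b|) / (c*c) := by
      rw [show (fun τ => S τ lam) = (fun τ => Real.sinh (c * τ) / c) from funext hS]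
      exact intervalIntegral.integral_eq_sub_of_hasDerivAt (fun τ _ => hF τ)
        ((by fun_prop : Continuous fun τ => Real.sinh (c*τ)/c).intervalIntegrable _ _)
    rw [hint, hS a, hS b]
    have habs : Real.cosh (c * |a - b|) = Real.cosh (c * (a - b)) := by
      rw [show c * |a - b| = |c * (a - b)| by
        rw [abs_mul, abs_of_pos hcpos], Real.cosh_abs]
    rw [habs, show c * (a+b) = c*a + c*b by ring, show c*(a-b) = c*a - c*b by ring,
      Real.cosh_add, Real.cosh_sub]
    field_simp
    ring
  · subst h
    have h0 : ∀ τ : ℝ, S τ 0 = τ := fun τ => by simp [S]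
    simp only [h0]
    rw [integral_id, sq_abs]
    ring
  · set c := Real.sqrt lam with hc
    have hcpos : 0 < c := Real.sqrt_pos.2 h
    have hc2 : c * c = lam := Real.mul_self_sqrt h.le
    have hS : ∀ τ : ℝ, S τ lam = Real.sin (c * τ) / c := by
      intro τ; simp [S, h, hc]
    have hF : ∀ τ : ℝ, HasDerivAt (fun x => -Real.cos (c * x) / (c * c))
        (Real.sin (c * τ) / c) τ := by
      intro τ
      have h1 : HasDerivAt (fun x : ℝ => c * x) c τ := by
        simpa using (hasDerivAt_id τ).const_mul c
      have h2 := ((Real.hasDerivAt_cos (c * τ)).comp τ h1).neg.div_const (c * c)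
      convert h2 using 1
      · exact rfl
      · exact rfl
      · exact rfl
      field_simp
    have hint : (∫ τ in (|a - b|)..(a + b), S τ lam)
        = -Real.cos (c * (a+b)) / (c*c) - -Real.cos (c * |a - b|) / (c*c) := by
      rw [show (fun τ => S τ lam) = (fun τ => Real.sin (c * τ) / c) from funext hS]
      exact intervalIntegral.integral_eq_sub_of_hasDerivAt (fun τ _ => hF τ)
        ((by fun_prop : Continuous fun τ => Real.sin (c*τ)/c).intervalIntegrable _ _)
    rw [hint, hS a, hS b]
    have habs : Real.cos (c * |a - b|) = Real.cos (c * (a - b)) := by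
      rw [show c * |a - b| = |c * (a - b)| by
        rw [abs_mul, abs_of_pos hcpos], Real.cos_abs]
    rw [habs, show c * (a+b) = c*a + c*b by ring, show c*(a-b) = c*a - c*b by ring,
      Real.cos_add, Real.cos_sub]
    field_simp
    ring

lemma S_key' (lam T t s : ℝ) :
    (1/2) * (∫ τ in (|t - s|)..(2*T - s - t), S τ lam)
      = S (T - t) lam * S (T - s) lam := by
  have h := S_key lam (T - t) (T - s)
  have h1 : |(T - t) - (T - s)| = |t - s| := by
    rw [show (T - t) - (T - s) = -(t - s) by ring, abs_neg]
  have h2 : (T - t) + (T - s) = 2*T - s - t := by ring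
  rw [h1, h2] at h
  exact h

/-- the connecting operator admits the dynamic representation
`(C^T f)(t) = (1/2) ∫₀ᵀ (∫_{|t-s|}^{2T-s-t} r(τ) dτ) f(s) ds` with response
function `r(t) = ∑ₖ Sₖ(t)/ρₖ`; equivalently, for each `k`,
`(1/2)∫_{|t-s|}^{2T-s-t} S(τ,λₖ) dτ = S(T-t,λₖ) S(T-s,λₖ)` for `0 ≤ s,t ≤ T`. -/
theorem connecting_operator_dynamic_representation
    (N : ℕ) (T : ℝ) (hT : 0 < T)
    (lam : Fin N → ℝ)
    (rho : Fin N → ℝ) (hrhopos : ∀ k, 0 < rho k)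
    (r : ℝ → ℝ) (hr : ∀ t : ℝ, r t = ∑ k : Fin N, S t (lam k) / rho k)
    (Cop : (ℝ → ℝ) → (ℝ → ℝ))
    (hC : ∀ (f : ℝ → ℝ) (t : ℝ),
      Cop f t = ∫ s in (0:ℝ)..T,
        (∑ k : Fin N, (1 / rho k) * S (T - t) (lam k) * S (T - s) (lam k)) * f s) :
    (∀ k : Fin N, ∀ t ∈ Set.Icc (0:ℝ) T, ∀ s ∈ Set.Icc (0:ℝ) T,
        (1 / 2) * (∫ τ in (|t - s|)..(2 * T - s - t), S τ (lam k))
          = S (T - t) (lam k) * S (T - s) (lam k)) ∧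
      ∀ (f : ℝ → ℝ), Continuous f → ∀ t ∈ Set.Icc (0:ℝ) T,
        Cop f t = (1 / 2) * ∫ s in (0:ℝ)..T,
          (∫ τ in (|t - s|)..(2 * T - s - t), r τ) * f s := by
  constructor
  · intro k t _ s _
    exact S_key' (lam k) T t s
  · intro f hf t ht
    rw [hC]
    have key : ∀ s : ℝ,
        (∑ k : Fin N, (1 / rho k) * S (T - t) (lam k) * S (T - s) (lam k)) * f s
          = (1/2) * ((∫ τ in (|t - s|)..(2 * T - s - t), r τ) * f s) := by
      intro s
      have hr' : (∫ τ in (|t - s|)..(2 * T - s - t), r τ)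
          = ∑ k : Fin N, (∫ τ in (|t - s|)..(2 * T - s - t), S τ (lam k)) / rho k := by
        rw [show r = fun τ => ∑ k : Fin N, S τ (lam k) / rho k from funext hr]
        rw [intervalIntegral.integral_finset_sum]
        · exact Finset.sum_congr rfl fun k _ => intervalIntegral.integral_div _ _
        · intro k _
          exact ((S_cont (lam k)).div_const _).intervalIntegrable _ _
      have hk : ∀ k : Fin N, (∫ τ in (|t - s|)..(2 * T - s - t), S τ (lam k))
          = 2 * (S (T - t) (lam k) * S (T - s) (lam k)) := by
        intro k
        have := S_key' (lam k) T t s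
        linarith
      simp only [hr', hk]
      have hsum : (∑ k : Fin N, (1 / rho k) * S (T - t) (lam k) * S (T - s) (lam k))
          = (1/2) * ∑ k : Fin N, 2 * (S (T - t) (lam k) * S (T - s) (lam k)) / rho k := by
        rw [Finset.mul_sum]
        refine Finset.sum_congr rfl fun k _ => ?_
        field_simp
      rw [hsum]
      ring
    rw [intervalIntegral.integral_congr (fun s _ => key s)]
    rw [intervalIntegral.integral_const_mul]
end

section
/- If C^T is positive definite on F_1^T and the controls f_1^T,...,f_N^T ∈ F_1^T drive the system to the standard basis states u^{f_k^T}(T) = e_k ∈ ℝ^N, then f_1^T solves the Krein equation (C^T f_1^T)(t) = r(T-t) for 0 < t < T. -/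
open MeasureTheory

lemma S_continuous (lam : ℝ) : Continuous fun t => S t lam := by
  unfold S
  split_ifs <;> fun_prop

lemma span_continuous {N : ℕ} (T : ℝ) (lam : Fin N → ℝ) (f : ℝ → ℝ)
    (hf : f ∈ Submodule.span ℝ
      (Set.range fun k : Fin N => fun t : ℝ => S (T - t) (lam k))) :
    Continuous f := by
  induction hf using Submodule.span_induction with
  | mem x hx =>
    obtain ⟨k, rfl⟩ := hx
    exact (S_continuous (lam k)).comp (by fun_prop)
  | zero => exact continuous_const
  | add x y _ _ hx hy => exact hx.add hy
  | smul c x _ hx => exact hx.const_smul c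

/-- Krein equation: if `C^T` is positive definite on
`F₁^T = span{Sₖ(T-·)}` and the control `f₁ ∈ F₁^T` drives the system to the
first standard basis state `u^{f₁}(T) = e₁`, then `f₁` solves the Krein
equation `(C^T f₁)(t) = r(T - t)` for `0 < t < T`, where
`r(t) = ∑ₖ Sₖ(t)/ρₖ` is the response function. -/
theorem krein_equation_for_first_control
    (N : ℕ) (hN : 0 < N) (T : ℝ) (hT : 0 < T)
    (lam : Fin N → ℝ)
    (phiv : Fin N → Fin N → ℝ)
    (hfirst : ∀ k : Fin N, phiv k ⟨0, hN⟩ = 1)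
    (rho : Fin N → ℝ) (hrhopos : ∀ k, 0 < rho k)
    (horth : ∀ j k : Fin N,
      ∑ i : Fin N, phiv j i * phiv k i = if j = k then rho k else 0)
    (W : (ℝ → ℝ) → (Fin N → ℝ))
    (hW : ∀ f : ℝ → ℝ,
      W f = fun i => ∑ k : Fin N,
        (1 / rho k) * (∫ τ in (0:ℝ)..T, S (T - τ) (lam k) * f τ) * phiv k i)
    (Cop : (ℝ → ℝ) → (ℝ → ℝ))
    (hC : ∀ (f : ℝ → ℝ) (t : ℝ),
      Cop f t = ∫ s in (0:ℝ)..T,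
        (∑ k : Fin N, (1 / rho k) * S (T - t) (lam k) * S (T - s) (lam k)) * f s)
    (r : ℝ → ℝ) (hr : ∀ t : ℝ, r t = ∑ k : Fin N, S t (lam k) / rho k)
    (hposdef : ∀ f : ℝ → ℝ, Continuous f →
      f ∈ Submodule.span ℝ
        (Set.range fun k : Fin N => fun t : ℝ => S (T - t) (lam k)) →
      f ≠ 0 → 0 < ∫ t in (0:ℝ)..T, Cop f t * f t)
    (f₁ : ℝ → ℝ)
    (hf₁mem : f₁ ∈ Submodule.span ℝ
      (Set.range fun k : Fin N => fun t : ℝ => S (T - t) (lam k)))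
    (hf₁ : W f₁ = fun i : Fin N => if i = ⟨0, hN⟩ then 1 else 0) :
    ∀ t ∈ Set.Ioo (0:ℝ) T, Cop f₁ t = r (T - t) := by
  have hcont : Continuous f₁ := span_continuous T lam f₁ hf₁mem
  set c : Fin N → ℝ := fun k => ∫ τ in (0:ℝ)..T, S (T - τ) (lam k) * f₁ τ with hc
  -- From hf₁: coefficients are all 1
  have hcoef : ∀ i : Fin N,
      ∑ k : Fin N, (1 / rho k) * c k * phiv k i = if i = ⟨0, hN⟩ then 1 else 0 := by
    intro i
    have := congrFun ((hW f₁).symm.trans hf₁) i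
    simpa [hc] using this
  have hck : ∀ j : Fin N, c j = 1 := by
    intro j
    have key : ∑ i : Fin N, (∑ k : Fin N, (1 / rho k) * c k * phiv k i) * phiv j i
        = c j := by
      simp_rw [Finset.sum_mul]
      rw [Finset.sum_comm]
      have : ∀ k : Fin N,
          ∑ i : Fin N, ((1 / rho k) * c k * phiv k i) * phiv j i
            = (1 / rho k) * c k * (if k = j then rho j else 0) := by
        intro k
        rw [show ((1 / rho k) * c k * (if k = j then rho j else 0))
            = (1 / rho k) * c k * ∑ i : Fin N, phiv k i * phiv j i from by
              rw [horth k j]]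
        rw [Finset.mul_sum]
        exact Finset.sum_congr rfl fun i _ => by ring
      rw [Finset.sum_congr rfl fun k _ => this k]
      simp only [mul_ite, mul_zero]
      rw [Finset.sum_ite_eq' Finset.univ j (fun k => (1 / rho k) * c k * rho j)]
      simp only [Finset.mem_univ, if_true]
      field_simp
      rw [mul_div_assoc, mul_comm, div_mul_cancel₀ _ (hrhopos j).ne']
    have key2 : ∑ i : Fin N, (∑ k : Fin N, (1 / rho k) * c k * phiv k i) * phiv j i
        = ∑ i : Fin N, (if i = ⟨0, hN⟩ then (1:ℝ) else 0) * phiv j i := by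
      exact Finset.sum_congr rfl fun i _ => by rw [hcoef i]
    rw [key2] at key
    simp [ite_mul, hfirst j] at key
    exact key.symm
  intro t ht
  rw [hC, hr]
  have hint : ∀ k : Fin N, IntervalIntegrable
      (fun s => (1 / rho k) * S (T - t) (lam k) * S (T - s) (lam k) * f₁ s)
      volume 0 T := by
    intro k
    apply Continuous.intervalIntegrable
    exact (continuous_const.mul ((S_continuous (lam k)).comp (by fun_prop))).mul hcont
  calc ∫ s in (0:ℝ)..T,
        (∑ k : Fin N, (1 / rho k) * S (T - t) (lam k) * S (T - s) (lam k)) * f₁ s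
      = ∫ s in (0:ℝ)..T,
        ∑ k : Fin N, (1 / rho k) * S (T - t) (lam k) * S (T - s) (lam k) * f₁ s := by
        congr 1; ext s; rw [Finset.sum_mul]
    _ = ∑ k : Fin N, ∫ s in (0:ℝ)..T,
        (1 / rho k) * S (T - t) (lam k) * S (T - s) (lam k) * f₁ s := by
        exact intervalIntegral.integral_finset_sum fun k _ => hint k
    _ = ∑ k : Fin N, (1 / rho k) * S (T - t) (lam k) * c k := by
        refine Finset.sum_congr rfl fun k _ => ?_
        rw [hc]
        rw [← intervalIntegral.integral_const_mul]
        congr 1; ext s; ring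
    _ = ∑ k : Fin N, S (T - t) (lam k) / rho k := by
        refine Finset.sum_congr rfl fun k _ => ?_
        rw [hck k, mul_one, one_div_mul_eq_div]
end
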